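/- Let g be a Lie algebra over a field k and let r : g → n_n(k) be a wide homomorphism. Then for every pair of indices 1 ≤ i < j ≤ n there exists u ∈ g^{(j−i)} with λ_{i,j}(u) ≠ 0; that is, every canonical matrix entry of r is surjective. -/

import Mathlib

attribute [local instance 100] LieRing.ofAssociativeRing

section Aux

variable {k : Type*} [Field k] {g : Type*} [LieRing g] [LieAlgebra k g] {n : ℕ}

lemma stmt8_bracket (r : g →ₗ⁅k⁆ Matrix (Fin n) (Fin n) k) (v w : g) (i j : Fin n) :
    r ⁅v, w⁆ i j = ∑ l : Fin n, (r v i l * r w l j - r w i l * r v l j) := by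
  have h : r ⁅v, w⁆ = r v * r w - r w * r v := by
    rw [LieHom.map_lie, Ring.lie_def]
  rw [h]
  simp [Matrix.sub_apply, Matrix.mul_apply, Finset.sum_sub_distrib]

lemma stmt8_vanish (r : g →ₗ⁅k⁆ Matrix (Fin n) (Fin n) k)
    (hr : ∀ (v : g) (i j : Fin n), j ≤ i → r v i j = 0) :
    ∀ m : ℕ, ∀ u ∈ LieModule.lowerCentralSeries k g g m,
      ∀ i l : Fin n, (l : ℕ) ≤ (i : ℕ) + m → r u i l = 0 := by
  intro m
  induction m with
  | zero =>
    intro u _ i l hl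
    exact hr u i l (Fin.le_def.mpr (by omega))
  | succ m ih =>
    intro u hu
    rw [LieModule.lowerCentralSeries_succ, ← LieSubmodule.mem_toSubmodule,
      LieSubmodule.lieIdeal_oper_eq_linear_span'] at hu
    induction hu using Submodule.span_induction with
    | mem u hu =>
      obtain ⟨x, -, w, hw, rfl⟩ := hu
      intro i l hl
      rw [stmt8_bracket]
      apply Finset.sum_eq_zero
      intro t _
      have h1 : r x i t * r w t l = 0 := by
        by_cases ht : (t : ℕ) ≤ (i : ℕ)
        · rw [hr x i t (Fin.le_def.mpr ht), zero_mul]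
        · rw [ih w hw t l (by omega), mul_zero]
      have h2 : r w i t * r x t l = 0 := by
        by_cases ht : (t : ℕ) ≤ (i : ℕ) + m
        · rw [ih w hw i t ht, zero_mul]
        · rw [hr x t l (Fin.le_def.mpr (by omega)), mul_zero]
      rw [h1, h2, sub_zero]
    | zero => intro i l _; simp
    | add x y hx hy ihx ihy => intro i l hl; simp [ihx i l hl, ihy i l hl]
    | smul a x hx ihx => intro i l hl; simp [ihx i l hl]

lemma stmt8_aux (r : g →ₗ⁅k⁆ Matrix (Fin n) (Fin n) k)
    (hr : ∀ (v : g) (i j : Fin n), j ≤ i → r v i j = 0)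
    (hflag : ∀ (i : ℕ) (hi : i + 1 < n), ∃ v : g, r v ⟨i, Nat.lt_of_succ_lt hi⟩ ⟨i + 1, hi⟩ ≠ 0)
    (hwide : ∀ (i j : ℕ) (hi : i + 1 < n) (hj : j + 1 < n), i ≠ j →
      ∀ a b : k,
        (∀ v : g,
          a * r v ⟨i, Nat.lt_of_succ_lt hi⟩ ⟨i + 1, hi⟩ + b * r v ⟨j, Nat.lt_of_succ_lt hj⟩ ⟨j + 1, hj⟩ = 0) →
        a = 0 ∧ b = 0) :
    ∀ s : ℕ, ∀ i j : Fin n, (j : ℕ) = (i : ℕ) + s + 1 →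
      ∃ u ∈ LieModule.lowerCentralSeries k g g s, r u i j ≠ 0 := by
  intro s
  induction s with
  | zero =>
    intro i j hij
    have hjn : (j : ℕ) < n := j.isLt
    have hi : (i : ℕ) + 1 < n := by omega
    obtain ⟨v, hv⟩ := hflag (i : ℕ) hi
    refine ⟨v, by simp, ?_⟩
    have hj' : j = ⟨(i : ℕ) + 1, hi⟩ := Fin.ext (by show (j : ℕ) = (i : ℕ) + 1; omega)
    rw [hj']
    exact hv
  | succ s ih =>
    intro i j hij
    have hjn : (j : ℕ) < n := j.isLt
    set i1 : Fin n := ⟨(i : ℕ) + 1, by omega⟩ with hi1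
    set j1 : Fin n := ⟨(j : ℕ) - 1, by omega⟩ with hj1
    obtain ⟨w, hw, hwne⟩ := ih i1 j (show (j : ℕ) = (i : ℕ) + 1 + s + 1 by omega)
    set a : k := r w i1 j with ha
    set b : k := - r w i j1 with hb
    have hex : ∃ v : g, a * r v i i1 + b * r v j1 j ≠ 0 := by
      by_contra hall
      push_neg at hall
      apply hwne
      refine (hwide (i : ℕ) ((j : ℕ) - 1) (by omega) (by omega) (by omega) a b ?_).1
      intro v
      have h := hall v
      have e : (⟨(j : ℕ) - 1 + 1, by omega⟩ : Fin n) = j :=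
        Fin.ext (by show (j : ℕ) - 1 + 1 = (j : ℕ); omega)
      simp only [e]
      exact h
    obtain ⟨v, hv⟩ := hex
    refine ⟨⁅v, w⁆, ?_, ?_⟩
    · rw [LieModule.lowerCentralSeries_succ]
      exact LieSubmodule.lie_mem_lie (LieSubmodule.mem_top v) hw
    · rw [stmt8_bracket]
      have hsum : ∑ l : Fin n, (r v i l * r w l j - r w i l * r v l j)
          = ∑ l ∈ ({i1, j1} : Finset (Fin n)),
            (r v i l * r w l j - r w i l * r v l j) := by
        refine (Finset.sum_subset (Finset.subset_univ _) ?_).symm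
        intro t _ ht
        simp only [Finset.mem_insert, Finset.mem_singleton, not_or] at ht
        obtain ⟨ht1, ht2⟩ := ht
        have hti1 : (t : ℕ) ≠ (i : ℕ) + 1 := fun h => ht1 (Fin.ext h)
        have htj1 : (t : ℕ) ≠ (j : ℕ) - 1 := fun h => ht2 (Fin.ext h)
        have h1 : r v i t * r w t j = 0 := by
          by_cases ht : (t : ℕ) ≤ (i : ℕ)
          · rw [hr v i t (Fin.le_def.mpr ht), zero_mul]
          · rw [stmt8_vanish r hr s w hw t j (by omega), mul_zero]
        have h2 : r w i t * r v t j = 0 := by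
          by_cases ht : (t : ℕ) ≤ (i : ℕ) + s
          · rw [stmt8_vanish r hr s w hw i t ht, zero_mul]
          · rw [hr v t j (Fin.le_def.mpr (by omega)), mul_zero]
        rw [h1, h2, sub_zero]
      rw [hsum]
      by_cases hs : i1 = j1
      · rw [← hs]
        rw [Finset.insert_eq_self.mpr (Finset.mem_singleton_self i1), Finset.sum_singleton]
        rw [← hs] at hv
        have : r v i i1 * r w i1 j - r w i i1 * r v i1 j
            = a * r v i i1 + b * r v i1 j := by
          rw [ha, hb]
          have : r w i j1 = r w i i1 := by rw [hs]
          rw [this]; ring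
        rw [this]
        exact hv
      · rw [Finset.sum_pair hs]
        have hs' : 1 ≤ s := by
          by_contra hcon
          exact hs (Fin.ext (show (i : ℕ) + 1 = (j : ℕ) - 1 by omega))
        have e1 : r w i i1 = 0 := stmt8_vanish r hr s w hw i i1 (show (i : ℕ) + 1 ≤ (i : ℕ) + s by omega)
        have e2 : r w j1 j = 0 := stmt8_vanish r hr s w hw j1 j (show (j : ℕ) ≤ (j : ℕ) - 1 + s by omega)
        have : r v i i1 * r w i1 j - r w i i1 * r v i1 j +
            (r v i j1 * r w j1 j - r w i j1 * r v j1 j)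
            = a * r v i i1 + b * r v j1 j := by
          rw [e1, e2, ha, hb]; ring
        rw [this]
        exact hv

end Aux

/-- Let `r : g → n_n(k)` be a wide homomorphism (flag, with the successor
entry functionals `λ_{i,i+1}` pairwise linearly independent).  Then for every pair `i < j`
there exists `u ∈ g^{(j-i)}` with `λ_{i,j}(u) ≠ 0`; i.e. every canonical matrix entry of `r`
is surjective.  (Note Mathlib's `lowerCentralSeries ⋯ 0 = g = g^{(1)}`, so `g^{(s)}` is
`lowerCentralSeries ⋯ (s-1)`.) -/
theorem stmt_8 {k : Type*} [Field k] {g : Type*} [LieRing g] [LieAlgebra k g] {n : ℕ}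
    (r : g →ₗ⁅k⁆ Matrix (Fin n) (Fin n) k)
    (hr : ∀ (v : g) (i j : Fin n), j ≤ i → r v i j = 0)
    (hflag : ∀ (i : ℕ) (hi : i + 1 < n), ∃ v : g, r v ⟨i, by omega⟩ ⟨i + 1, hi⟩ ≠ 0)
    (hwide : ∀ (i j : ℕ) (hi : i + 1 < n) (hj : j + 1 < n), i ≠ j →
      ∀ a b : k,
        (∀ v : g,
          a * r v ⟨i, by omega⟩ ⟨i + 1, hi⟩ + b * r v ⟨j, by omega⟩ ⟨j + 1, hj⟩ = 0) →
        a = 0 ∧ b = 0) :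
    ∀ i j : Fin n, i < j →
      ∃ u ∈ LieModule.lowerCentralSeries k g g ((j : ℕ) - (i : ℕ) - 1), r u i j ≠ 0 := by
  intro i j hij
  exact stmt8_aux r hr hflag hwide ((j : ℕ) - (i : ℕ) - 1) i j
    (by have := Fin.lt_def.mp hij; omega)
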